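/- For even n = 2k with n ≥ 6, in any schedule with guaranteed rest time k-2 and games-played difference index 1, every team plays exactly once in every round (where round i consists of games at positions (i-1)k + 1 through ik). -/

import Mathlib

/-- `f` lists the games of a single round-robin tournament on `n` teams:
positions `0, ..., N-1` are in bijection with the unordered pairs of distinct teams. -/
def isSchedule (n N : ℕ) (f : ℕ → Sym2 (Fin n)) : Prop :=
  (∀ i, i < N → ¬ (f i).IsDiag) ∧
  ∀ p : Sym2 (Fin n), ¬ p.IsDiag → ∃! i, i < N ∧ f i = p

/-- The schedule has guaranteed rest time at least `b`: any two games involving a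
common team `t` are separated by at least `b` games not involving `t`. -/
def hasRest (n N : ℕ) (f : ℕ → Sym2 (Fin n)) (b : ℕ) : Prop :=
  ∀ t : Fin n, ∀ i j, i < j → j < N → t ∈ f i → t ∈ f j →
    b ≤ ((Finset.Ioo i j).filter (fun l => t ∉ f l)).card

/-- Number of games played by team `t` in the first `m` games. -/
def played (n : ℕ) (f : ℕ → Sym2 (Fin n)) (t : Fin n) (m : ℕ) : ℕ :=
  ((Finset.range m).filter (fun i => t ∈ f i)).card

/-- The games-played difference index is at most `p`. -/
def gpLe (n N : ℕ) (f : ℕ → Sym2 (Fin n)) (p : ℕ) : Prop :=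
  ∀ m, m ≤ N → ∀ t1 t2 : Fin n, played n f t1 m ≤ played n f t2 m + p

/-- The rest of team `t` going into the game at position `i`: the number of games since
`t`'s previous game, where all teams play an imaginary game one slot before game `0`. -/
def rest (n : ℕ) (f : ℕ → Sym2 (Fin n)) (t : Fin n) (i : ℕ) : ℕ :=
  ((Finset.range i).filter (fun j => ∀ l, j ≤ l → l < i → t ∉ f l)).card

/-- The rest difference index is at most `d`. -/
def rdLe (n N : ℕ) (f : ℕ → Sym2 (Fin n)) (d : ℕ) : Prop :=
  ∀ i, i < N → ∀ t1 t2 : Fin n, t1 ∈ f i → t2 ∈ f i →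
    rest n f t1 i ≤ rest n f t2 i + d



lemma card_mem_sym2 {n : ℕ} (p : Sym2 (Fin n)) (hp : ¬ p.IsDiag) :
    (Finset.univ.filter (fun t => t ∈ p)).card = 2 := by
  induction p using Sym2.ind with
  | _ a b =>
    have hab : a ≠ b := by simpa using hp
    have : (Finset.univ.filter (fun t => t ∈ s(a,b))) = {a, b} := by
      ext x; simp [Sym2.mem_iff]
    rw [this, Finset.card_pair hab]

lemma sum_played {n N : ℕ} (f : ℕ → Sym2 (Fin n))
    (h : ∀ i, i < N → ¬ (f i).IsDiag) (m : ℕ) (hm : m ≤ N) :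
    ∑ t : Fin n, played n f t m = 2 * m := by
  unfold played
  simp only [Finset.card_filter]
  rw [Finset.sum_comm]
  rw [Finset.sum_congr rfl (fun i hi => ?_), Finset.sum_const, Finset.card_range, smul_eq_mul,
    mul_comm]
  have hi' : i < N := lt_of_lt_of_le (Finset.mem_range.mp hi) hm
  have := card_mem_sym2 (f i) (h i hi')
  rw [← this, Finset.card_filter]

lemma all_eq {K i : ℕ} (hK : 1 ≤ K) (v : Fin K → ℕ)
    (hsum : ∑ t, v t = K * i) (hd : ∀ t1 t2, v t1 ≤ v t2 + 1) :
    ∀ t, v t = i := by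
  intro t
  have ht : t ∈ Finset.univ := Finset.mem_univ t
  have hsplit : ∑ s ∈ Finset.univ.erase t, v s + v t = K * i := by
    rw [Finset.sum_erase_add _ _ ht]; exact hsum
  have hcard : (Finset.univ.erase t).card = K - 1 := by
    rw [Finset.card_erase_of_mem ht, Finset.card_univ, Fintype.card_fin]
  by_contra h
  rcases Nat.lt_or_ge (v t) i with hlt | hge
  · have h1 : ∑ s ∈ Finset.univ.erase t, v s ≤ (K - 1) * i := by
      calc ∑ s ∈ Finset.univ.erase t, v s ≤ ∑ _s ∈ Finset.univ.erase t, i :=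
            Finset.sum_le_sum (fun s _ => le_trans (hd s t) hlt)
        _ = (K - 1) * i := by rw [Finset.sum_const, hcard, smul_eq_mul]
    have e1 : (K - 1) * i = K * i - i := by rw [Nat.sub_one_mul]
    have e2 : i ≤ K * i := Nat.le_mul_of_pos_left i hK
    omega
  · have hgt : i + 1 ≤ v t := by omega
    have h1 : (K - 1) * i ≤ ∑ s ∈ Finset.univ.erase t, v s := by
      calc (K - 1) * i = ∑ _s ∈ Finset.univ.erase t, i := by
            rw [Finset.sum_const, hcard, smul_eq_mul]
        _ ≤ ∑ s ∈ Finset.univ.erase t, v s :=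
            Finset.sum_le_sum (fun s _ => by have := hd t s; omega)
    have e1 : (K - 1) * i = K * i - i := by rw [Nat.sub_one_mul]
    have e2 : i ≤ K * i := Nat.le_mul_of_pos_left i hK
    omega

/-- For even `n = 2k ≥ 6`, in any schedule with guaranteed rest time `k-2` and
games-played difference index `1`, every team plays exactly once in every round
(round `i`, for `1 ≤ i ≤ n-1`, consists of games at 0-indexed positions
`(i-1)k, ..., ik - 1`). -/
theorem stmt7 (k : ℕ) (hk : 3 ≤ k) (f : ℕ → Sym2 (Fin (2*k)))
    (hf : isSchedule (2*k) (2*k*(2*k-1)/2) f)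
    (hrest : hasRest (2*k) (2*k*(2*k-1)/2) f (k-2))
    (hgp : gpLe (2*k) (2*k*(2*k-1)/2) f 1) :
    ∀ i, 1 ≤ i → i ≤ 2*k - 1 →
      ∀ t : Fin (2*k), ((Finset.Ico ((i-1)*k) (i*k)).filter (fun l => t ∈ f l)).card = 1 := by
  intro i hi1 hi2 t
  have hN : 2*k*(2*k-1)/2 = k*(2*k-1) := by
    rw [mul_assoc, Nat.mul_div_cancel_left _ (by norm_num : 0 < 2)]
  have hK : 1 ≤ 2*k := by omega
  -- key: after j*k games, every team has played exactly j, for j*k ≤ N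
  have key : ∀ j, j ≤ 2*k - 1 → ∀ s : Fin (2*k), played (2*k) f s (j*k) = j := by
    intro j hj
    have hjk : j*k ≤ 2*k*(2*k-1)/2 := by
      rw [hN, mul_comm k (2*k-1)]
      exact Nat.mul_le_mul_right k hj
    apply all_eq hK
    · rw [sum_played f hf.1 (j*k) hjk]
      ring
    · intro t1 t2
      exact hgp (j*k) hjk t1 t2
  have h1 : played (2*k) f t (i*k) = i := key i hi2 t
  have h2 : played (2*k) f t ((i-1)*k) = i-1 := key (i-1) (by omega) t
  have hle : (i-1)*k ≤ i*k := Nat.mul_le_mul_right k (by omega)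
  have hsplit : played (2*k) f t (i*k) =
      played (2*k) f t ((i-1)*k) +
      ((Finset.Ico ((i-1)*k) (i*k)).filter (fun l => t ∈ f l)).card := by
    unfold played
    rw [Finset.range_eq_Ico,
      ← Finset.Ico_union_Ico_eq_Ico (Nat.zero_le _) hle, Finset.filter_union,
      Finset.card_union_of_disjoint]
    · rw [Finset.range_eq_Ico]
    exact Finset.disjoint_filter_filter (p := fun l => t ∈ f l) (q := fun l => t ∈ f l) (Finset.Ico_disjoint_Ico_consecutive (α := ℕ) _ _ _)
  omega
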